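/- Let f : [0,∞) → ℝ be continuous with |f(s) − L| ≤ K e^{−s} for all s ≥ 0, for some constants L ∈ ℝ and K > 0, and let i ≥ 1 be an integer. Let Λ(t) = e^{2t} θ(t) where θ : [0,∞) → ℝ is continuous with 0 < c ≤ θ(t) ≤ C for all t and |θ(t) − θ_∞| ≤ C e^{−2t} for some θ_∞ > 0. Then there exists a constant C' > 0 such that |Λ(t)^{−i} ∫₀ᵗ Λ(s)^i f(s) ds − L/(2i)| ≤ C' e^{−t} for all t ≥ 0. -/

import Mathlib

lemma aux_pow_sub (n : ℕ) {a b M : ℝ} (ha : 0 ≤ a) (hb : 0 ≤ b) (haM : a ≤ M) (hbM : b ≤ M) :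
    |a ^ n - b ^ n| ≤ n * M ^ (n - 1) * |a - b| := by
  rw [← geom_sum₂_mul a b n, abs_mul]
  have hsum : |∑ j ∈ Finset.range n, a ^ j * b ^ (n - 1 - j)| ≤ n * M ^ (n - 1) := by
    calc |∑ j ∈ Finset.range n, a ^ j * b ^ (n - 1 - j)|
        ≤ ∑ j ∈ Finset.range n, |a ^ j * b ^ (n - 1 - j)| := Finset.abs_sum_le_sum_abs _ _
      _ ≤ ∑ _j ∈ Finset.range n, M ^ (n - 1) := by
          apply Finset.sum_le_sum
          intro j hj
          rw [Finset.mem_range] at hj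
          rw [abs_mul, abs_pow, abs_pow, abs_of_nonneg ha, abs_of_nonneg hb]
          calc a ^ j * b ^ (n - 1 - j) ≤ M ^ j * M ^ (n - 1 - j) :=
                mul_le_mul (pow_le_pow_left₀ ha haM j) (pow_le_pow_left₀ hb hbM _)
                  (pow_nonneg hb _) (pow_nonneg (ha.trans haM) _)
        _ = M ^ (n - 1) := by rw [← pow_add]; congr 1; omega
      _ = n * M ^ (n - 1) := by rw [Finset.sum_const, Finset.card_range, nsmul_eq_mul]
  exact mul_le_mul_of_nonneg_right hsum (abs_nonneg _)

lemma aux_exp_integral (a : ℝ) (ha : a ≠ 0) (u : ℝ) :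
    (∫ s in (0:ℝ)..u, Real.exp (a * s)) = (Real.exp (a * u) - 1) / a := by
  have hder : ∀ s ∈ Set.uIcc (0:ℝ) u,
      HasDerivAt (fun x => Real.exp (a * x) / a) (Real.exp (a * s)) s := by
    intro s _
    have h1 : HasDerivAt (fun x : ℝ => a * x) a s := by
      simpa using (hasDerivAt_id s).const_mul a
    have h2 : HasDerivAt (fun x => Real.exp (a * x)) (Real.exp (a * s) * a) s :=
      (Real.hasDerivAt_exp (a * s)).comp s h1
    have h3 := h2.div_const a
    simpa [mul_div_assoc, mul_div_cancel_right₀ _ ha] using h3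
  rw [intervalIntegral.integral_eq_sub_of_hasDerivAt hder
    ((Real.continuous_exp.comp (continuous_const.mul continuous_id)).intervalIntegrable 0 u)]
  simp only [mul_zero, Real.exp_zero]
  ring

set_option maxHeartbeats 1000000 in
/-- abstract kernel estimate — exponentially converging integrands
averaged against powers of Λ(t) = e^{2t} θ(t) converge exponentially to L/(2i). -/
theorem stmt19 (f θ : ℝ → ℝ) (L K θinf c C : ℝ) (hK : 0 < K)
    (hf : ContinuousOn f (Set.Ici (0:ℝ)))
    (hfL : ∀ s : ℝ, 0 ≤ s → |f s - L| ≤ K * Real.exp (-s))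
    (i : ℕ) (hi : 1 ≤ i)
    (hθcont : ContinuousOn θ (Set.Ici (0:ℝ)))
    (hc : 0 < c)
    (hθbdd : ∀ t : ℝ, 0 ≤ t → c ≤ θ t ∧ θ t ≤ C)
    (hθinf : 0 < θinf)
    (hθrate : ∀ t : ℝ, 0 ≤ t → |θ t - θinf| ≤ C * Real.exp (-2 * t)) :
    ∃ C' : ℝ, 0 < C' ∧ ∀ t : ℝ, 0 ≤ t →
      |((Real.exp (2 * t) * θ t) ^ i)⁻¹ *
          (∫ s in (0:ℝ)..t, (Real.exp (2 * s) * θ s) ^ i * f s) - L / (2 * i)|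
        ≤ C' * Real.exp (-t) := by
  have hn1 : (1:ℝ) ≤ (i:ℝ) := by exact_mod_cast hi
  have hC : 0 < C := hc.trans_le ((hθbdd 0 le_rfl).1.trans (hθbdd 0 le_rfl).2)
  have hC0 : (0:ℝ) ≤ C := hC.le
  set M : ℝ := 2 * C with hMdef
  have hM0 : (0:ℝ) ≤ M := by rw [hMdef]; linarith
  have hinfM : θinf ≤ M := by
    have h0 := hθrate 0 le_rfl
    have h1 := (hθbdd 0 le_rfl).2
    rw [mul_zero, Real.exp_zero, mul_one] at h0
    have h2 := abs_le.mp h0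
    rw [hMdef]; linarith [h2.1]
  set k : ℝ := 2 * (i:ℝ) with hkdef
  have hk2 : (2:ℝ) ≤ k := by rw [hkdef]; linarith
  have hkpos : (0:ℝ) < k := by linarith
  have hk0 : k ≠ 0 := ne_of_gt hkpos
  have hk1 : (0:ℝ) < k - 1 := by linarith
  have hk1' : k - 1 ≠ 0 := ne_of_gt hk1
  set K₁ : ℝ := C ^ i * K + |L| * ((i:ℝ) * M ^ (i - 1) * C) with hK₁def
  have hK₁0 : 0 ≤ K₁ := by
    rw [hK₁def]
    have : (0:ℝ) ≤ (i:ℝ) * M ^ (i - 1) * C :=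
      mul_nonneg (mul_nonneg (Nat.cast_nonneg i) (pow_nonneg hM0 _)) hC0
    nlinarith [pow_nonneg hC0 i, abs_nonneg L, hK.le]
  -- pointwise error estimate
  have hptw : ∀ s : ℝ, 0 ≤ s → |θ s ^ i * f s - θinf ^ i * L| ≤ K₁ * Real.exp (-s) := by
    intro s hs
    obtain ⟨hθ1, hθ2⟩ := hθbdd s hs
    have h0θ : 0 ≤ θ s := le_trans hc.le hθ1
    have hθM : θ s ≤ M := by rw [hMdef]; linarith
    have hp : |θ s ^ i - θinf ^ i| ≤ (i:ℝ) * M ^ (i - 1) * |θ s - θinf| :=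
      aux_pow_sub i h0θ hθinf.le hθM hinfM
    have hiM0 : (0:ℝ) ≤ (i:ℝ) * M ^ (i - 1) :=
      mul_nonneg (Nat.cast_nonneg i) (pow_nonneg hM0 _)
    have hexple : Real.exp (-2 * s) ≤ Real.exp (-s) := Real.exp_le_exp.mpr (by linarith)
    have heq : θ s ^ i * f s - θinf ^ i * L = θ s ^ i * (f s - L) + (θ s ^ i - θinf ^ i) * L := by
      ring
    rw [heq]
    have b1 : θ s ^ i * |f s - L| ≤ C ^ i * (K * Real.exp (-s)) :=
      mul_le_mul (pow_le_pow_left₀ h0θ hθ2 i) (hfL s hs) (abs_nonneg _) (pow_nonneg hC0 i)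
    have b2 : |θ s ^ i - θinf ^ i| * |L| ≤ ((i:ℝ) * M ^ (i - 1) * (C * Real.exp (-s))) * |L| := by
      apply mul_le_mul_of_nonneg_right _ (abs_nonneg L)
      calc |θ s ^ i - θinf ^ i| ≤ (i:ℝ) * M ^ (i - 1) * |θ s - θinf| := hp
        _ ≤ (i:ℝ) * M ^ (i - 1) * (C * Real.exp (-2 * s)) :=
            mul_le_mul_of_nonneg_left (hθrate s hs) hiM0
        _ ≤ (i:ℝ) * M ^ (i - 1) * (C * Real.exp (-s)) := by
            apply mul_le_mul_of_nonneg_left _ hiM0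
            exact mul_le_mul_of_nonneg_left hexple hC0
    calc |θ s ^ i * (f s - L) + (θ s ^ i - θinf ^ i) * L|
        ≤ |θ s ^ i * (f s - L)| + |(θ s ^ i - θinf ^ i) * L| := abs_add_le _ _
      _ = θ s ^ i * |f s - L| + |θ s ^ i - θinf ^ i| * |L| := by
          rw [abs_mul, abs_mul, abs_of_nonneg (pow_nonneg h0θ i)]
      _ ≤ C ^ i * (K * Real.exp (-s)) + ((i:ℝ) * M ^ (i - 1) * (C * Real.exp (-s))) * |L| := by
          linarith
      _ = K₁ * Real.exp (-s) := by rw [hK₁def]; ring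
  refine ⟨K₁ / (c ^ i * (k - 1)) + |L| / k * (((i:ℝ) * M ^ (i - 1) * C + M ^ i) / c ^ i) + 1,
    ?_, ?_⟩
  · have h1 : 0 ≤ K₁ / (c ^ i * (k - 1)) :=
      div_nonneg hK₁0 (mul_nonneg (pow_nonneg hc.le i) hk1.le)
    have h2 : 0 ≤ |L| / k * (((i:ℝ) * M ^ (i - 1) * C + M ^ i) / c ^ i) := by
      apply mul_nonneg (div_nonneg (abs_nonneg L) hkpos.le)
      apply div_nonneg _ (pow_nonneg hc.le i)
      have : (0:ℝ) ≤ (i:ℝ) * M ^ (i - 1) * C :=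
        mul_nonneg (mul_nonneg (Nat.cast_nonneg i) (pow_nonneg hM0 _)) hC0
      nlinarith [pow_nonneg hM0 i]
    linarith
  intro t ht
  obtain ⟨hθt1, hθt2⟩ := hθbdd t ht
  have h0θt : 0 ≤ θ t := le_trans hc.le hθt1
  have hθtM : θ t ≤ M := by rw [hMdef]; linarith
  have hθtpos : 0 < θ t := hc.trans_le hθt1
  have hPpos : 0 < θ t ^ i := pow_pos hθtpos i
  have hP0 : θ t ^ i ≠ 0 := ne_of_gt hPpos
  have hePos : 0 < Real.exp (k * t) := Real.exp_pos _
  have heP : Real.exp (k * t) ≠ 0 := ne_of_gt hePos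
  have hsubset : Set.uIcc (0:ℝ) t ⊆ Set.Ici (0:ℝ) := by
    rw [Set.uIcc_of_le ht]; exact Set.Icc_subset_Ici_self
  -- integrability
  have hcont_err : ContinuousOn (fun s => Real.exp (k * s) * (θ s ^ i * f s - θinf ^ i * L))
      (Set.Ici (0:ℝ)) := by
    apply ContinuousOn.mul
    · exact (Real.continuous_exp.comp (continuous_const.mul continuous_id)).continuousOn
    · exact ((hθcont.pow i).mul hf).sub continuousOn_const
  have hint1 : IntervalIntegrable (fun s => Real.exp (k * s) * (θ s ^ i * f s - θinf ^ i * L))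
      MeasureTheory.volume 0 t :=
    (hcont_err.mono hsubset).intervalIntegrable
  have hint2 : IntervalIntegrable (fun s => θinf ^ i * L * Real.exp (k * s))
      MeasureTheory.volume 0 t :=
    ((continuous_const.mul (Real.continuous_exp.comp (continuous_const.mul continuous_id))).intervalIntegrable 0 t)
  -- decomposition of the integral
  have hfun : (fun s => (Real.exp (2 * s) * θ s) ^ i * f s)
      = fun s => Real.exp (k * s) * (θ s ^ i * f s - θinf ^ i * L)
          + θinf ^ i * L * Real.exp (k * s) := by
    funext s
    rw [mul_pow, ← Real.exp_nat_mul]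
    have h2 : (i:ℝ) * (2 * s) = k * s := by rw [hkdef]; ring
    rw [h2]; ring
  set R : ℝ := ∫ s in (0:ℝ)..t, Real.exp (k * s) * (θ s ^ i * f s - θinf ^ i * L) with hRdef
  have hIeq : (∫ s in (0:ℝ)..t, (Real.exp (2 * s) * θ s) ^ i * f s)
      = R + θinf ^ i * L * ((Real.exp (k * t) - 1) / k) := by
    rw [hfun, intervalIntegral.integral_add hint1 hint2,
      intervalIntegral.integral_const_mul, aux_exp_integral k hk0 t, hRdef]
  -- bound on R
  have hRbound : |R| ≤ K₁ * Real.exp ((k - 1) * t) / (k - 1) := by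
    have hae : ∀ᵐ s ∂(MeasureTheory.volume.restrict (Set.uIoc (0:ℝ) t)),
        ‖Real.exp (k * s) * (θ s ^ i * f s - θinf ^ i * L)‖ ≤ K₁ * Real.exp ((k - 1) * s) := by
      rw [Set.uIoc_of_le ht]
      filter_upwards [MeasureTheory.ae_restrict_mem measurableSet_Ioc] with s hs
      have hs0 : (0:ℝ) ≤ s := hs.1.le
      rw [Real.norm_eq_abs, abs_mul, Real.abs_exp]
      calc Real.exp (k * s) * |θ s ^ i * f s - θinf ^ i * L|
          ≤ Real.exp (k * s) * (K₁ * Real.exp (-s)) :=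
            mul_le_mul_of_nonneg_left (hptw s hs0) (Real.exp_pos _).le
        _ = K₁ * Real.exp ((k - 1) * s) := by
            rw [show (k - 1) * s = k * s + -s by ring, Real.exp_add]; ring
    have hgint : IntervalIntegrable (fun s => K₁ * Real.exp ((k - 1) * s))
        MeasureTheory.volume 0 t :=
      (continuous_const.mul (Real.continuous_exp.comp (continuous_const.mul continuous_id))).intervalIntegrable 0 t
    have h := intervalIntegral.norm_integral_le_abs_of_norm_le hae hgint
    rw [Real.norm_eq_abs] at h
    have hg : (∫ s in (0:ℝ)..t, K₁ * Real.exp ((k - 1) * s))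
        = K₁ * ((Real.exp ((k - 1) * t) - 1) / (k - 1)) := by
      rw [intervalIntegral.integral_const_mul, aux_exp_integral (k - 1) hk1' t]
    rw [hg] at h
    have h1 : (1:ℝ) ≤ Real.exp ((k - 1) * t) :=
      Real.one_le_exp (mul_nonneg hk1.le ht)
    have h2 : K₁ * ((Real.exp ((k - 1) * t) - 1) / (k - 1)) ≤ K₁ * Real.exp ((k - 1) * t) / (k - 1) := by
      rw [mul_div_assoc]
      exact mul_le_mul_of_nonneg_left ((div_le_div_iff_of_pos_right hk1).mpr (by linarith)) hK₁0
    calc |R| ≤ |K₁ * ((Real.exp ((k - 1) * t) - 1) / (k - 1))| := h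
      _ = K₁ * ((Real.exp ((k - 1) * t) - 1) / (k - 1)) := by
          rw [abs_of_nonneg]
          exact mul_nonneg hK₁0 (div_nonneg (by linarith) hk1.le)
      _ ≤ K₁ * Real.exp ((k - 1) * t) / (k - 1) := h2
  -- key algebraic identity
  have hpowt : (Real.exp (2 * t) * θ t) ^ i = Real.exp (k * t) * θ t ^ i := by
    rw [mul_pow, ← Real.exp_nat_mul]
    congr 2
    rw [hkdef]; ring
  have hkey : (Real.exp (k * t) * θ t ^ i)⁻¹ *
      (R + θinf ^ i * L * ((Real.exp (k * t) - 1) / k)) - L / k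
      = L / k * ((θinf ^ i - θ t ^ i) / θ t ^ i)
        - L / k * (θinf ^ i / (Real.exp (k * t) * θ t ^ i))
        + R * (Real.exp (k * t) * θ t ^ i)⁻¹ := by
    field_simp
    ring
  rw [hIeq, hpowt, hkey]
  -- bound the three terms
  have hexpt : Real.exp t ≤ Real.exp (k * t) := Real.exp_le_exp.mpr (by nlinarith)
  have hcP : c ^ i ≤ θ t ^ i := pow_le_pow_left₀ hc.le hθt1 i
  have hcPos : (0:ℝ) < c ^ i := pow_pos hc i
  have hA : |L / k * ((θinf ^ i - θ t ^ i) / θ t ^ i)|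
      ≤ |L| / k * (((i:ℝ) * M ^ (i - 1) * C * Real.exp (-t)) / c ^ i) := by
    rw [abs_mul, abs_div, abs_div, abs_of_pos hkpos, abs_of_pos hPpos]
    have hnum : |θinf ^ i - θ t ^ i| ≤ (i:ℝ) * M ^ (i - 1) * C * Real.exp (-t) := by
      calc |θinf ^ i - θ t ^ i| ≤ (i:ℝ) * M ^ (i - 1) * |θinf - θ t| :=
            aux_pow_sub i hθinf.le h0θt hinfM hθtM
        _ = (i:ℝ) * M ^ (i - 1) * |θ t - θinf| := by rw [abs_sub_comm]
        _ ≤ (i:ℝ) * M ^ (i - 1) * (C * Real.exp (-2 * t)) :=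
            mul_le_mul_of_nonneg_left (hθrate t ht)
              (mul_nonneg (Nat.cast_nonneg i) (pow_nonneg hM0 _))
        _ ≤ (i:ℝ) * M ^ (i - 1) * (C * Real.exp (-t)) := by
            apply mul_le_mul_of_nonneg_left _ (mul_nonneg (Nat.cast_nonneg i) (pow_nonneg hM0 _))
            exact mul_le_mul_of_nonneg_left (Real.exp_le_exp.mpr (by linarith)) hC0
        _ = (i:ℝ) * M ^ (i - 1) * C * Real.exp (-t) := by ring
    apply mul_le_mul_of_nonneg_left _ (div_nonneg (abs_nonneg L) hkpos.le)
    exact div_le_div₀ ((abs_nonneg _).trans hnum) hnum (pow_pos hc i) (pow_le_pow_left₀ hc.le hθt1 i)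
  have hB : |L / k * (θinf ^ i / (Real.exp (k * t) * θ t ^ i))|
      ≤ |L| / k * (M ^ i * Real.exp (-t) / c ^ i) := by
    rw [abs_mul, abs_div, abs_of_pos hkpos]
    have hfrac : |θinf ^ i / (Real.exp (k * t) * θ t ^ i)| ≤ M ^ i * Real.exp (-t) / c ^ i := by
      rw [abs_of_nonneg (div_nonneg (pow_nonneg hθinf.le i) (mul_nonneg hePos.le hPpos.le))]
      calc θinf ^ i / (Real.exp (k * t) * θ t ^ i) ≤ M ^ i / (Real.exp t * c ^ i) := by
            apply div_le_div₀ (pow_nonneg hM0 i) (pow_le_pow_left₀ hθinf.le hinfM i)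
              (by positivity)
            exact mul_le_mul hexpt hcP hcPos.le hePos.le
        _ = M ^ i * Real.exp (-t) / c ^ i := by
            rw [Real.exp_neg]; field_simp
    exact mul_le_mul_of_nonneg_left hfrac (div_nonneg (abs_nonneg L) hkpos.le)
  have hRterm : |R * (Real.exp (k * t) * θ t ^ i)⁻¹| ≤ K₁ / ((k - 1) * c ^ i) * Real.exp (-t) := by
    rw [abs_mul, abs_inv, abs_of_pos (mul_pos hePos hPpos)]
    calc |R| * (Real.exp (k * t) * θ t ^ i)⁻¹
        ≤ (K₁ * Real.exp ((k - 1) * t) / (k - 1)) * (Real.exp (k * t) * c ^ i)⁻¹ := by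
          apply mul_le_mul hRbound _ (inv_nonneg.mpr (mul_pos hePos hPpos).le)
            (div_nonneg (mul_nonneg hK₁0 (Real.exp_pos _).le) hk1.le)
          apply inv_anti₀ (by positivity)
          exact mul_le_mul_of_nonneg_left hcP hePos.le
      _ = K₁ / ((k - 1) * c ^ i) * Real.exp (-t) := by
          rw [show Real.exp (-t) = Real.exp ((k - 1) * t) / Real.exp (k * t) by
            rw [← Real.exp_sub]; congr 1; ring]
          field_simp
  calc |L / k * ((θinf ^ i - θ t ^ i) / θ t ^ i)
        - L / k * (θinf ^ i / (Real.exp (k * t) * θ t ^ i))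
        + R * (Real.exp (k * t) * θ t ^ i)⁻¹|
      ≤ |L / k * ((θinf ^ i - θ t ^ i) / θ t ^ i)
          - L / k * (θinf ^ i / (Real.exp (k * t) * θ t ^ i))|
        + |R * (Real.exp (k * t) * θ t ^ i)⁻¹| := abs_add_le _ _
    _ ≤ |L / k * ((θinf ^ i - θ t ^ i) / θ t ^ i)|
        + |L / k * (θinf ^ i / (Real.exp (k * t) * θ t ^ i))|
        + |R * (Real.exp (k * t) * θ t ^ i)⁻¹| := by
          have := abs_sub (L / k * ((θinf ^ i - θ t ^ i) / θ t ^ i))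
            (L / k * (θinf ^ i / (Real.exp (k * t) * θ t ^ i)))
          linarith [abs_sub_abs_le_abs_sub (L / k * ((θinf ^ i - θ t ^ i) / θ t ^ i)) 0]
    _ ≤ |L| / k * (((i:ℝ) * M ^ (i - 1) * C * Real.exp (-t)) / c ^ i)
        + |L| / k * (M ^ i * Real.exp (-t) / c ^ i)
        + K₁ / ((k - 1) * c ^ i) * Real.exp (-t) := by linarith
    _ = (K₁ / (c ^ i * (k - 1)) + |L| / k * (((i:ℝ) * M ^ (i - 1) * C + M ^ i) / c ^ i))
        * Real.exp (-t) := by ring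
    _ ≤ (K₁ / (c ^ i * (k - 1)) + |L| / k * (((i:ℝ) * M ^ (i - 1) * C + M ^ i) / c ^ i) + 1)
        * Real.exp (-t) := by
          apply mul_le_mul_of_nonneg_right (by linarith) (Real.exp_pos _).le
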